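/- Let μ ⊆ λ be Young diagrams and let T = (T⁽¹⁾,…,T⁽ᵏ⁾) ∈ X_μ^λ be such that every component is a singleton, i.e. |T⁽ⁱ⁾| = 1 for all i, say T⁽ⁱ⁾ = {dᵢ}. For each i with 2 ≤ i ≤ k, the cell dᵢ is mergeable if and only if dᵢ₋₁ < dᵢ in the total order. Consequently, T has no mergeable cell if and only if d₁ > d₂ > ⋯ > d_k. -/

import Mathlib

/-- The cells of the skew shape `λ/μ`. -/
def skewCells (μ lam : YoungDiagram) : Finset (ℕ × ℕ) := lam.cells \ μ.cells

/-- The total order on cells induced by a filling `f`: a cell `c = (i,j)` is smaller than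
`c' = (i',j')` if `f c < f c'`, or `f c = f c'` and `j < j'`, or
`f c = f c'`, `j = j'` and `i > i'`. -/
def cellLT (f : ℕ × ℕ → ℕ) (c c' : ℕ × ℕ) : Prop :=
  f c < f c' ∨ (f c = f c' ∧ (c.2 < c'.2 ∨ (c.2 = c'.2 ∧ c'.1 < c.1)))

/-- `f` is a semistandard filling on the cell set `s`: entries are positive,
weakly increasing along rows (left to right) and strictly increasing down columns. -/
def IsSSYTOn (f : ℕ × ℕ → ℕ) (s : Finset (ℕ × ℕ)) : Prop :=
  (∀ c ∈ s, 0 < f c) ∧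
  (∀ i j j', j ≤ j' → (i, j) ∈ s → (i, j') ∈ s → f (i, j) ≤ f (i, j')) ∧
  (∀ i i' j, i < i' → (i, j) ∈ s → (i', j) ∈ s → f (i, j) < f (i', j))

/-- An element of `X_μ^λ`: a chain `μ = λ₀ ⊊ λ₁ ⊊ ⋯ ⊊ λ_k = λ` of Young diagrams together
with a filling of `λ/μ` whose restriction to each piece `λᵢ₊₁/λᵢ` is a semistandard Young
tableau.  (The tuple `(T⁽¹⁾, …, T⁽ᵏ⁾)` is recorded as the single concatenated filling
`entry`, normalized to be `0` outside `λ/μ`; the chain is recorded as a function on `ℕ`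
constantly equal to `λ` from index `k` on.) -/
structure XTuple (μ lam : YoungDiagram) where
  k : ℕ
  chain : ℕ → YoungDiagram
  chain_zero : chain 0 = μ
  chain_last : ∀ i, k ≤ i → chain i = lam
  chain_strict : ∀ i < k, (chain i).cells ⊂ (chain (i + 1)).cells
  entry : ℕ × ℕ → ℕ
  entry_eq_zero : ∀ c ∉ skewCells μ lam, entry c = 0
  piece_ssyt : ∀ i < k, IsSSYTOn entry ((chain (i + 1)).cells \ (chain i).cells)

/-- The cells of the `i`-th piece `T⁽ⁱ⁺¹⁾` (0-indexed: piece `i` has shape `λᵢ₊₁/λᵢ`). -/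
def pieceCells {μ lam : YoungDiagram} (T : XTuple μ lam) (i : ℕ) : Finset (ℕ × ℕ) :=
  (T.chain (i + 1)).cells \ (T.chain i).cells

/-- The length `ℓ(T) = k` of an element of `X_μ^λ`. -/
def XTuple.len {μ lam : YoungDiagram} (T : XTuple μ lam) : ℕ := T.k

/-- The cell `c`, lying in piece `i`, is splittable: its piece has more than one cell and
`c` is the largest cell of its piece. -/
def SplittableAt {μ lam : YoungDiagram} (T : XTuple μ lam) (c : ℕ × ℕ) (i : ℕ) : Prop :=
  i < T.k ∧ c ∈ pieceCells T i ∧ 1 < (pieceCells T i).card ∧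
    ∀ c' ∈ pieceCells T i, c' ≠ c → cellLT T.entry c' c

/-- The cell `c` is splittable in `T`. -/
def SplittableCell {μ lam : YoungDiagram} (T : XTuple μ lam) (c : ℕ × ℕ) : Prop :=
  ∃ i, SplittableAt T c i

/-- The cell `c`, lying in piece `i`, is mergeable: it is not in the first piece, its piece
is a single cell, the union of its piece with the previous piece is semistandard, and `c`
is larger than every cell of the previous piece. -/
def MergeableAt {μ lam : YoungDiagram} (T : XTuple μ lam) (c : ℕ × ℕ) (i : ℕ) : Prop :=
  1 ≤ i ∧ i < T.k ∧ c ∈ pieceCells T i ∧ (pieceCells T i).card = 1 ∧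
    IsSSYTOn T.entry (pieceCells T (i - 1) ∪ pieceCells T i) ∧
    ∀ c' ∈ pieceCells T (i - 1), cellLT T.entry c' c

/-- The cell `c` is mergeable in `T`. -/
def MergeableCell {μ lam : YoungDiagram} (T : XTuple μ lam) (c : ℕ × ℕ) : Prop :=
  ∃ i, MergeableAt T c i

/-- `cell(T)`: the largest cell of `T` (in the total order `cellLT T.entry`) among the
splittable or mergeable cells, or `none` (i.e. `∅`) if there is no such cell. -/
noncomputable def cellOf {μ lam : YoungDiagram} (T : XTuple μ lam) : Option (ℕ × ℕ) := by
  classical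
  exact if h : ∃ c, (SplittableCell T c ∨ MergeableCell T c) ∧
      ∀ c', (SplittableCell T c' ∨ MergeableCell T c') → c' ≠ c → cellLT T.entry c' c
    then some h.choose else none

/-- `T` is splittable if `cell(T)` is a splittable cell. -/
def XTuple.Splittable {μ lam : YoungDiagram} (T : XTuple μ lam) : Prop :=
  ∃ c, cellOf T = some c ∧ SplittableCell T c

/-- `T` is mergeable if `cell(T)` is a mergeable cell. -/
def XTuple.Mergeable {μ lam : YoungDiagram} (T : XTuple μ lam) : Prop :=
  ∃ c, cellOf T = some c ∧ MergeableCell T c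

/-- The graph of the map `Φ`:  if `cell(T)` is splittable and lies in piece `i`, the piece
is replaced by the pair `(T⁽ⁱ⁾ ∖ {cell(T)}, {cell(T)})`, i.e. the Young diagram
`λᵢ₊₁ ∖ {cell(T)}` is inserted into the chain; if `cell(T)` is mergeable and lies in piece
`i`, the pieces `i-1` and `i` are merged, i.e. `λᵢ` is deleted from the chain; if
`cell(T) = ∅` then `T` is fixed.  The filling is unchanged in all cases. -/
def PhiRel {μ lam : YoungDiagram} (T T' : XTuple μ lam) : Prop :=
  (∃ c i, cellOf T = some c ∧ SplittableAt T c i ∧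
      T'.k = T.k + 1 ∧ T'.entry = T.entry ∧
      (∀ j, j ≤ i → T'.chain j = T.chain j) ∧
      (T'.chain (i + 1)).cells = (T.chain (i + 1)).cells.erase c ∧
      (∀ j, i + 2 ≤ j → T'.chain j = T.chain (j - 1))) ∨
  (∃ c i, cellOf T = some c ∧ MergeableAt T c i ∧
      T'.k + 1 = T.k ∧ T'.entry = T.entry ∧
      (∀ j, j < i → T'.chain j = T.chain j) ∧
      (∀ j, i ≤ j → T'.chain j = T.chain (j + 1))) ∨
  (cellOf T = none ∧ T' = T)

/-- The map `Φ : X_μ^λ → X_μ^λ`. -/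
noncomputable def Phi {μ lam : YoungDiagram} (T : XTuple μ lam) : XTuple μ lam := by
  classical
  exact if h : ∃ T', PhiRel T T' then h.choose else T

lemma cellLT_asymm {f : ℕ × ℕ → ℕ} {a b : ℕ × ℕ} (h : cellLT f a b) (h' : cellLT f b a) :
    False := by
  rcases h with h | ⟨h1, h2 | ⟨h2, h3⟩⟩ <;> rcases h' with h' | ⟨h1', h2' | ⟨h2', h3'⟩⟩ <;> omega

lemma cellLT_total {f : ℕ × ℕ → ℕ} {a b : ℕ × ℕ} (hne : a ≠ b) (h : ¬ cellLT f a b) :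
    cellLT f b a := by
  unfold cellLT at *
  rcases lt_trichotomy (f a) (f b) with h1 | h1 | h1
  · exact absurd (Or.inl h1) h
  · rcases lt_trichotomy a.2 b.2 with h2 | h2 | h2
    · exact absurd (Or.inr ⟨h1, Or.inl h2⟩) h
    · rcases lt_trichotomy a.1 b.1 with h3 | h3 | h3
      · exact Or.inr ⟨h1.symm, Or.inr ⟨h2.symm, h3⟩⟩
      · exact absurd (Prod.ext h3 h2) hne
      · exact absurd (Or.inr ⟨h1, Or.inr ⟨h2, h3⟩⟩) h
    · exact Or.inr ⟨h1.symm, Or.inl h2⟩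
  · exact Or.inl h1

lemma chain_mono {μ lam : YoungDiagram} (T : XTuple μ lam) {i j : ℕ} (hij : i ≤ j) :
    (T.chain i).cells ⊆ (T.chain j).cells := by
  induction j with
  | zero => simp_all
  | succ n ih =>
    rcases Nat.lt_or_ge i (n + 1) with h | h
    · refine (ih (by omega)).trans ?_
      rcases Nat.lt_or_ge n T.k with hn | hn
      · exact (T.chain_strict n hn).subset
      · rw [T.chain_last n hn, T.chain_last (n + 1) (by omega)]
    · have : i = n + 1 := by omega
      subst this; exact subset_rfl

/-- Let `T = (T⁽¹⁾, …, T⁽ᵏ⁾) ∈ X_μ^λ` have all components singletons, say `T⁽ⁱ⁾ = {dᵢ}`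
(here 0-indexed: piece `i` is `T⁽ⁱ⁺¹⁾`, so `d i` is the paper's `d_{i+1}`).  Then for each
`i` with `2 ≤ i+1 ≤ k` (i.e. `1 ≤ i < k`), the cell `d i` is mergeable iff
`d (i-1) < d i` in the total order; consequently `T` has no mergeable cell iff
`d 0 > d 1 > ⋯ > d (k-1)`. -/
theorem mergeable_iff_of_singletons (μ lam : YoungDiagram) (hsub : μ ≤ lam)
    (T : XTuple μ lam) (d : ℕ → ℕ × ℕ)
    (hd : ∀ i < T.k, pieceCells T i = {d i}) :
    (∀ i, 1 ≤ i → i < T.k →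
      (MergeableCell T (d i) ↔ cellLT T.entry (d (i - 1)) (d i))) ∧
    ((∀ c, ¬ MergeableCell T c) ↔
      ∀ i, i + 1 < T.k → cellLT T.entry (d (i + 1)) (d i)) := by
  classical
  have hdm : ∀ i, i < T.k → d i ∈ pieceCells T i := by
    intro i hi; rw [hd i hi]; exact Finset.mem_singleton_self _
  have hmem : ∀ i, i < T.k → d i ∈ (T.chain (i + 1)).cells ∧ d i ∉ (T.chain i).cells := by
    intro i hi
    have := hdm i hi
    rw [pieceCells, Finset.mem_sdiff] at this
    exact this
  have hinj : ∀ i j, i < T.k → j < T.k → d i = d j → i = j := by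
    intro i j hi hj hij
    by_contra hne
    rcases Nat.lt_or_ge i j with h | h
    · have h1 : d i ∈ (T.chain j).cells := chain_mono T (by omega : i + 1 ≤ j) (hmem i hi).1
      rw [hij] at h1; exact (hmem j hj).2 h1
    · have h' : j < i := by omega
      have h1 : d j ∈ (T.chain i).cells := chain_mono T (by omega : j + 1 ≤ i) (hmem j hj).1
      rw [← hij] at h1; exact (hmem i hi).2 h1
  have key : ∀ i, 1 ≤ i → i < T.k →
      (MergeableCell T (d i) ↔ cellLT T.entry (d (i - 1)) (d i)) := by
    intro i h1 hi
    constructor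
    · rintro ⟨j, hj1, hj2, hj3, hj4, hj5, hj6⟩
      have hdj : d i = d j := by rwa [hd j hj2, Finset.mem_singleton] at hj3
      have hij : i = j := hinj i j hi hj2 hdj
      subst hij
      exact hj6 (d (i - 1)) (hdm (i - 1) (by omega))
    · intro hlt
      refine ⟨i, h1, hi, hdm i hi, by rw [hd i hi]; simp, ?_, ?_⟩
      · have him1 : i - 1 < T.k := by omega
        have hstep : i - 1 + 1 = i := by omega
        set a := d (i - 1) with ha
        set b := d i with hb
        have haP := hdm (i - 1) him1
        have hbP := hdm i hi
        have haC : a ∈ (T.chain i).cells := by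
          have := (hmem (i - 1) him1).1; rwa [hstep] at this
        have hbC : b ∉ (T.chain i).cells := (hmem i hi).2
        have hgeo : ¬ (b.1 ≤ a.1 ∧ b.2 ≤ a.2) := by
          rintro ⟨h1', h2'⟩
          exact hbC ((T.chain i).up_left_mem h1' h2' haC)
        have hU : pieceCells T (i - 1) ∪ pieceCells T i = ({a, b} : Finset (ℕ × ℕ)) := by
          rw [hd (i - 1) him1, hd i hi]; ext x; simp [Finset.mem_insert, ha, hb]
        rw [hU]
        have hne : a ≠ b := by
          intro h; exact absurd (hinj (i - 1) i him1 hi h) (by omega)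
        have hposa : 0 < T.entry a := (T.piece_ssyt (i - 1) him1).1 a haP
        have hposb : 0 < T.entry b := (T.piece_ssyt i hi).1 b hbP
        refine ⟨?_, ?_, ?_⟩
        · intro c hc
          rcases Finset.mem_insert.mp hc with h | h
          · subst h; exact hposa
          · rw [Finset.mem_singleton] at h; subst h; exact hposb
        · intro r j j' hjj hm hm'
          simp only [Finset.mem_insert, Finset.mem_singleton] at hm hm'
          rcases hm with hm | hm <;> rcases hm' with hm' | hm'
          · rw [hm, hm']
          · rw [hm, hm']
            rcases hlt with h | ⟨h, _⟩
            · exact le_of_lt h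
            · exact le_of_eq h
          · exfalso
            apply hgeo
            have hb1 : b.1 = r := by rw [← hm]
            have hb2 : b.2 = j := by rw [← hm]
            have ha1 : a.1 = r := by rw [← hm']
            have ha2 : a.2 = j' := by rw [← hm']
            omega
          · rw [hm, hm']
        · intro r r' j hrr hm hm'
          simp only [Finset.mem_insert, Finset.mem_singleton] at hm hm'
          rcases hm with hm | hm <;> rcases hm' with hm' | hm'
          · exfalso
            have h1 : a.1 = r := by rw [← hm]
            have h2 : a.1 = r' := by rw [← hm']
            omega
          · rw [hm, hm']
            have ha1 : a.1 = r := by rw [← hm]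
            have ha2 : a.2 = j := by rw [← hm]
            have hb1 : b.1 = r' := by rw [← hm']
            have hb2 : b.2 = j := by rw [← hm']
            rcases hlt with h | ⟨h, h2' | ⟨h2', h3'⟩⟩
            · exact h
            · omega
            · omega
          · exfalso
            apply hgeo
            have hb1 : b.1 = r := by rw [← hm]
            have hb2 : b.2 = j := by rw [← hm]
            have ha1 : a.1 = r' := by rw [← hm']
            have ha2 : a.2 = j := by rw [← hm']
            omega
          · exfalso
            have h1 : b.1 = r := by rw [← hm]
            have h2 : b.1 = r' := by rw [← hm']
            omega
      · intro c' hc'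
        rw [hd (i - 1) (by omega), Finset.mem_singleton] at hc'
        subst hc'; exact hlt
  refine ⟨key, ?_, ?_⟩
  · intro hno i hi
    have hne : d i ≠ d (i + 1) := by
      intro h
      have := hinj i (i + 1) (by omega) hi h
      omega
    have hnot : ¬ cellLT T.entry (d i) (d (i + 1)) := by
      intro h
      apply hno (d (i + 1))
      refine (key (i + 1) (by omega) hi).mpr ?_
      simpa using h
    exact cellLT_total hne hnot
  · rintro hdec c ⟨j, hj1, hj2, hj3, hj4, hj5, hj6⟩
    have hc : c = d j := by rwa [hd j hj2, Finset.mem_singleton] at hj3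
    have h1 : cellLT T.entry (d (j - 1)) (d j) := by
      subst hc; exact hj6 (d (j - 1)) (hdm (j - 1) (by omega))
    have h2 : cellLT T.entry (d j) (d (j - 1)) := by
      have := hdec (j - 1) (by omega)
      simpa [Nat.sub_add_cancel hj1] using this
    exact cellLT_asymm h1 h2
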